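/- For every integer d ≥ 2 there exist a Hermitian matrix R on ℂ^d⊗ℂ^d and a Hermitian matrix S on ℂ^d such that R − T_b(J), R + T_b(J), I_d⊗S − T_b(R), and I_d⊗S + T_b(R) are all positive semidefinite and Tr(S) = 2, where J is the Choi operator of M_d. (This establishes β(M_d) ≤ 2 and hence C(M_d) ≤ 1 for all d; one may take R = (1/(d−1))∑_{j=0}^{d−2}|0⟩⟨0|⊗|j⟩⟨j| + ∑_{j=0}^{d−1}|j⟩⟨j|⊗|d−1⟩⟨d−1| + |ψ⟩⟨ψ| with |ψ⟩ = (1/√(d−1))∑_{j=1}^{d−1}|j⟩⊗|j−1⟩, and S = (1/(d−1))∑_{j=0}^{d−2}|j⟩⟨j| + |d−1⟩⟨d−1|.) -/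

import Mathlib

open Matrix Kronecker ComplexOrder

/-- Partial transpose on the second tensor factor. -/
noncomputable def ptransposeB {m n : ℕ}
    (M : Matrix (Fin m × Fin n) (Fin m × Fin n) ℂ) :
    Matrix (Fin m × Fin n) (Fin m × Fin n) ℂ :=
  Matrix.of fun p q => M (p.1, q.2) (q.1, p.2)

/-- The basis ket |i,j⟩ of ℂ^d ⊗ ℂ^d (zero if out of range). -/
noncomputable def ket2 (d i j : ℕ) : Fin d × Fin d → ℂ := fun p =>
  if (p.1 : ℕ) = i ∧ (p.2 : ℕ) = j then 1 else 0

/-- The unnormalized Choi operator of the channel M_d. -/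
noncomputable def choiMd (d : ℕ) : Matrix (Fin d × Fin d) (Fin d × Fin d) ℂ :=
  ∑ j ∈ Finset.range (d - 1),
    ((1 / ((d : ℂ) - 1)) • Matrix.vecMulVec (ket2 d 0 j) (star (ket2 d 0 j)) +
      Matrix.vecMulVec (ket2 d (j+1) (d-1)) (star (ket2 d (j+1) (d-1))) +
      ((1 / (Real.sqrt ((d : ℝ) - 1)) : ℝ) : ℂ) •
        (Matrix.vecMulVec (ket2 d 0 j) (star (ket2 d (j+1) (d-1))) +
          Matrix.vecMulVec (ket2 d (j+1) (d-1)) (star (ket2 d 0 j))))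

/-! ### Auxiliary lemmas -/

/-- Elementary "matrix unit" built from two kets. -/
noncomputable def Pm (d a b c e : ℕ) : Matrix (Fin d × Fin d) (Fin d × Fin d) ℂ :=
  vecMulVec (ket2 d a b) (star (ket2 d c e))

lemma star_ket2 (d i j : ℕ) : star (ket2 d i j) = ket2 d i j := by
  ext p; simp [ket2, Pi.star_apply, apply_ite (star : ℂ → ℂ)]

lemma Pm_def (d a b c e : ℕ) :
    vecMulVec (ket2 d a b) (star (ket2 d c e)) = Pm d a b c e := rfl

lemma Pm_eq (d a b c e : ℕ) :
    vecMulVec (ket2 d a b) (ket2 d c e) = Pm d a b c e := by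
  rw [Pm, star_ket2]

lemma Pm_apply (d a b c e : ℕ) (p q : Fin d × Fin d) :
    Pm d a b c e p q = (if (p.1:ℕ) = a then 1 else 0) * (if (p.2:ℕ) = b then 1 else 0)
      * ((if (q.1:ℕ) = c then 1 else 0) * (if (q.2:ℕ) = e then (1:ℂ) else 0)) := by
  rw [Pm, star_ket2]
  simp only [vecMulVec_apply, ket2]
  split_ifs <;> simp_all

lemma vmv_psd {ι : Type*} [Fintype ι] (v : ι → ℂ) :
    (vecMulVec v (star v)).PosSemidef := by
  have h : vecMulVec v (star v) = (Matrix.replicateRow Unit (star v))ᴴ * (Matrix.replicateRow Unit (star v)) := by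
    ext i j
    simp [vecMulVec_apply, Matrix.mul_apply, Matrix.replicateRow, Matrix.conjTranspose_apply]
  rw [h]
  exact posSemidef_conjTranspose_mul_self _

lemma psd_smul {ι : Type*} [Fintype ι] {M : Matrix ι ι ℂ} (hM : M.PosSemidef)
    {c : ℂ} (hc : 0 ≤ c) : (c • M).PosSemidef := by
  have hcr : star c = c := by
    rw [Complex.star_def, Complex.conj_eq_iff_im, (Complex.nonneg_iff.mp hc).2]
  refine posSemidef_iff_dotProduct_mulVec.mpr ⟨?_, ?_⟩
  · unfold Matrix.IsHermitian
    rw [conjTranspose_smul, hcr, hM.1]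
  · intro x
    have := hM.dotProduct_mulVec_nonneg x
    simp only [Matrix.smul_mulVec, dotProduct_smul, smul_eq_mul]
    exact mul_nonneg hc this

lemma psd_sum {ι κ : Type*} [Fintype ι] (s : Finset κ) (f : κ → Matrix ι ι ℂ)
    (h : ∀ k ∈ s, (f k).PosSemidef) : (∑ k ∈ s, f k).PosSemidef := by
  classical
  induction s using Finset.induction_on with
  | empty => simpa using Matrix.PosSemidef.zero
  | insert _ _ hk ih =>
    rw [Finset.sum_insert hk]
    exact ((h _ (Finset.mem_insert_self _ _))).add
      (ih fun k hks => h k (Finset.mem_insert_of_mem hks))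

lemma ptransposeB_add {m n : ℕ} (M N : Matrix (Fin m × Fin n) (Fin m × Fin n) ℂ) :
    ptransposeB (M + N) = ptransposeB M + ptransposeB N := by
  ext p q; simp [ptransposeB]

lemma ptransposeB_smul {m n : ℕ} (c : ℂ) (M : Matrix (Fin m × Fin n) (Fin m × Fin n) ℂ) :
    ptransposeB (c • M) = c • ptransposeB M := by
  ext p q; simp [ptransposeB]

lemma ptransposeB_sum {m n : ℕ} {κ : Type*} (s : Finset κ)
    (f : κ → Matrix (Fin m × Fin n) (Fin m × Fin n) ℂ) :
    ptransposeB (∑ k ∈ s, f k) = ∑ k ∈ s, ptransposeB (f k) := by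
  ext p q; simp [ptransposeB, Matrix.sum_apply]

lemma ptransposeB_Pm (d a b c e : ℕ) :
    ptransposeB (Pm d a b c e) = Pm d a e c b := by
  ext p q
  simp only [ptransposeB, Matrix.of_apply, Pm_apply]
  ring

lemma vmv_smul_left {ι : Type*} (a : ℂ) (v w : ι → ℂ) :
    vecMulVec (a • v) w = a • vecMulVec v w := by
  ext i j; simp [vecMulVec_apply, mul_assoc]

lemma vmv_smul_right {ι : Type*} (a : ℂ) (v w : ι → ℂ) :
    vecMulVec v (a • w) = a • vecMulVec v w := by
  ext i j; simp [vecMulVec_apply]; ring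

lemma vmv_sum_left {ι κ : Type*} (s : Finset κ) (f : κ → ι → ℂ) (w : ι → ℂ) :
    vecMulVec (∑ k ∈ s, f k) w = ∑ k ∈ s, vecMulVec (f k) w := by
  ext i j; simp [vecMulVec_apply, Matrix.sum_apply, Finset.sum_apply, Finset.sum_mul]

lemma vmv_sum_right {ι κ : Type*} (s : Finset κ) (v : ι → ℂ) (f : κ → ι → ℂ) :
    vecMulVec v (∑ k ∈ s, f k) = ∑ k ∈ s, vecMulVec v (f k) := by
  ext i j; simp [vecMulVec_apply, Matrix.sum_apply, Finset.sum_apply, Finset.mul_sum]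

lemma vmv_sub_left {ι : Type*} (u v w : ι → ℂ) :
    vecMulVec (u - v) w = vecMulVec u w - vecMulVec v w := by
  ext i j; simp [vecMulVec_apply, sub_mul]

lemma vmv_sub_right {ι : Type*} (u v w : ι → ℂ) :
    vecMulVec u (v - w) = vecMulVec u v - vecMulVec u w := by
  ext i j; simp [vecMulVec_apply, mul_sub]

lemma vmv_add_left {ι : Type*} (u v w : ι → ℂ) :
    vecMulVec (u + v) w = vecMulVec u w + vecMulVec v w := by
  ext i j; simp [vecMulVec_apply, add_mul]

lemma vmv_add_right {ι : Type*} (u v w : ι → ℂ) :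
    vecMulVec u (v + w) = vecMulVec u v + vecMulVec u w := by
  ext i j; simp [vecMulVec_apply, mul_add]

lemma kron_eq (n : ℕ) (c : ℂ) :
    (1 : Matrix (Fin (n+1)) (Fin (n+1)) ℂ) ⊗ₖ
        (diagonal fun j : Fin (n+1) => if (j:ℕ) < n then c else 1)
      = c • ∑ i ∈ Finset.range (n+1), ∑ j ∈ Finset.range n, Pm (n+1) i j i j
        + ∑ i ∈ Finset.range (n+1), Pm (n+1) i n i n := by
  ext ⟨p₁, p₂⟩ ⟨q₁, q₂⟩
  simp only [Matrix.add_apply, Matrix.smul_apply, Matrix.sum_apply, Pm_apply,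
    kroneckerMap_apply, Matrix.one_apply, diagonal_apply, smul_eq_mul]
  have hp₂ : (p₂:ℕ) ≤ n := Nat.lt_succ_iff.mp p₂.isLt
  by_cases h1 : (p₁:ℕ) = (q₁:ℕ)
  · have h1' : p₁ = q₁ := Fin.ext h1
    by_cases h2 : (p₂:ℕ) = (q₂:ℕ)
    · have h2' : p₂ = q₂ := Fin.ext h2
      have hsum2 : ∀ b : ℕ, ∑ i ∈ Finset.range (n+1),
          (if (p₁:ℕ) = i then (1:ℂ) else 0) * (if (p₂:ℕ) = b then 1 else 0) *
            ((if (q₁:ℕ) = i then 1 else 0) * (if (q₂:ℕ) = b then 1 else 0))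
          = if (p₂:ℕ) = b then 1 else 0 := by
        intro b
        rw [Finset.sum_eq_single_of_mem (p₁:ℕ) (Finset.mem_range.mpr p₁.isLt)]
        · rw [← h2]; split_ifs <;> simp_all
        · intro i _ hi
          split_ifs <;> simp_all
      by_cases h3 : (p₂:ℕ) < n
      · have hinner : ∑ j ∈ Finset.range n, (if (p₂:ℕ) = j then (1:ℂ) else 0)
            = 1 := by
          rw [Finset.sum_eq_single_of_mem (p₂:ℕ) (Finset.mem_range.mpr h3)]
          · simp
          · intro i _ hi; simp [Ne.symm hi]
        rw [Finset.sum_comm]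
        simp only [hsum2]
        rw [hinner]
        simp [h1', h2', h3]
        split_ifs <;> simp_all
      · have hb : (p₂:ℕ) = n := by omega
        rw [Finset.sum_comm]
        simp only [hsum2]
        have : ∑ j ∈ Finset.range n, (if (p₂:ℕ) = j then (1:ℂ) else 0) = 0 := by
          apply Finset.sum_eq_zero; intro i hi
          simp only [Finset.mem_range] at hi; split_ifs <;> first | omega | rfl
        rw [this, hb]
        simp [h1', h2', hb]
    · have h2' : p₂ ≠ q₂ := fun h => h2 (by rw [h])
      have z1 : ∀ i j : ℕ, (if (p₁:ℕ) = i then (1:ℂ) else 0) * (if (p₂:ℕ) = j then 1 else 0) *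
            ((if (q₁:ℕ) = i then 1 else 0) * (if (q₂:ℕ) = j then 1 else 0)) = 0 := by
        intro i j; split_ifs <;> simp_all
      simp [h2', z1, Finset.sum_eq_zero fun i _ => Finset.sum_eq_zero fun j _ => z1 i j,
        Finset.sum_eq_zero fun i _ => z1 i n]
      split_ifs <;> simp_all
  · have h1' : p₁ ≠ q₁ := fun h => h1 (by rw [h])
    have z1 : ∀ i j : ℕ, (if (p₁:ℕ) = i then (1:ℂ) else 0) * (if (p₂:ℕ) = j then 1 else 0) *
          ((if (q₁:ℕ) = i then 1 else 0) * (if (q₂:ℕ) = j then 1 else 0)) = 0 := by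
      intro i j; split_ifs <;> simp_all
    simp [h1', Finset.sum_eq_zero fun i _ => Finset.sum_eq_zero fun j _ => z1 i j,
      Finset.sum_eq_zero fun i _ => z1 i n]
    split_ifs <;> simp_all

/-- Feasible point for the Wang–Xie–Duan SDP: β(M_d) ≤ 2, hence C(M_d) ≤ 1. -/
theorem stmt4 (d : ℕ) (hd : 2 ≤ d) :
    ∃ (R : Matrix (Fin d × Fin d) (Fin d × Fin d) ℂ) (S : Matrix (Fin d) (Fin d) ℂ),
      R.IsHermitian ∧ S.IsHermitian ∧
      (R - ptransposeB (choiMd d)).PosSemidef ∧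
      (R + ptransposeB (choiMd d)).PosSemidef ∧
      ((1 : Matrix (Fin d) (Fin d) ℂ) ⊗ₖ S - ptransposeB R).PosSemidef ∧
      ((1 : Matrix (Fin d) (Fin d) ℂ) ⊗ₖ S + ptransposeB R).PosSemidef ∧
      S.trace = 2 := by
  obtain ⟨n, rfl⟩ : ∃ n, d = n + 1 := ⟨d - 1, by omega⟩
  have hn : 1 ≤ n := by omega
  have hnR : (0:ℝ) < (n:ℝ) := by exact_mod_cast hn
  -- scalars
  set c : ℂ := (((n:ℝ)⁻¹ : ℝ) : ℂ) with hc_def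
  set r : ℂ := (((Real.sqrt n)⁻¹ : ℝ) : ℂ) with hr_def
  have hc0 : (0:ℂ) ≤ c := by
    rw [hc_def]; exact_mod_cast Complex.zero_le_real.mpr (by positivity)
  have hr0 : (0:ℂ) ≤ r := by
    rw [hr_def]; exact_mod_cast Complex.zero_le_real.mpr (by positivity)
  have hrc : r * r = c := by
    rw [hr_def, hc_def, ← Complex.ofReal_mul, ← mul_inv, Real.mul_self_sqrt hnR.le]
  have hhalf : (0:ℂ) ≤ 1/2 := by
    rw [show (1/2 : ℂ) = ((1/2 : ℝ) : ℂ) by norm_num]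
    exact Complex.zero_le_real.mpr (by norm_num)
  have hstarc : star c = c := by rw [hc_def, Complex.star_def, Complex.conj_ofReal]
  have hstarr : star r = r := by rw [hr_def, Complex.star_def, Complex.conj_ofReal]
  -- coefficients appearing in choiMd
  have hcoef1 : 1 / (((n+1:ℕ):ℂ) - 1) = c := by
    rw [hc_def]; push_cast
    rw [one_div, add_sub_cancel_right]
  have hcoef2 : ((1 / Real.sqrt (((n+1:ℕ):ℝ) - 1) : ℝ) : ℂ) = r := by
    rw [hr_def]; norm_num
  -- the sums
  set Sig1 : Matrix (Fin (n+1) × Fin (n+1)) (Fin (n+1) × Fin (n+1)) ℂ :=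
    ∑ j ∈ Finset.range n, Pm (n+1) 0 j 0 j with hSig1
  set Sig2 : Matrix (Fin (n+1) × Fin (n+1)) (Fin (n+1) × Fin (n+1)) ℂ :=
    ∑ i ∈ Finset.range (n+1), Pm (n+1) i n i n with hSig2
  set Sig3 : Matrix (Fin (n+1) × Fin (n+1)) (Fin (n+1) × Fin (n+1)) ℂ :=
    ∑ j ∈ Finset.range n, Pm (n+1) (j+1) n (j+1) n with hSig3
  set SigA : Matrix (Fin (n+1) × Fin (n+1)) (Fin (n+1) × Fin (n+1)) ℂ :=
    ∑ j ∈ Finset.range n, Pm (n+1) 0 n (j+1) j with hSigA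
  set SigB : Matrix (Fin (n+1) × Fin (n+1)) (Fin (n+1) × Fin (n+1)) ℂ :=
    ∑ j ∈ Finset.range n, Pm (n+1) (j+1) j 0 n with hSigB
  set P1 : Matrix (Fin (n+1) × Fin (n+1)) (Fin (n+1) × Fin (n+1)) ℂ :=
    ∑ j ∈ Finset.range n, ∑ k ∈ Finset.range n, Pm (n+1) (j+1) k (j+1) k with hP1
  set W : Matrix (Fin (n+1) × Fin (n+1)) (Fin (n+1) × Fin (n+1)) ℂ :=
    ∑ j ∈ Finset.range n, ∑ k ∈ Finset.range n, Pm (n+1) (j+1) k (k+1) j with hW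
  -- the vector ψ
  set ψ : Fin (n+1) × Fin (n+1) → ℂ := r • ∑ j ∈ Finset.range n, ket2 (n+1) (j+1) j with hψ
  have hψstar : star ψ = ψ := by
    rw [hψ, star_smul, hstarr, star_sum]
    congr 1
    exact Finset.sum_congr rfl fun j _ => star_ket2 _ _ _
  -- candidates
  set R : Matrix (Fin (n+1) × Fin (n+1)) (Fin (n+1) × Fin (n+1)) ℂ :=
    c • Sig1 + Sig2 + vecMulVec ψ (star ψ) with hR
  set S : Matrix (Fin (n+1)) (Fin (n+1)) ℂ :=
    diagonal (fun j : Fin (n+1) => if (j:ℕ) < n then c else 1) with hS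
  -- ψψ* expansion
  have hψψ : vecMulVec ψ (star ψ) =
      (r*r) • ∑ j ∈ Finset.range n, ∑ k ∈ Finset.range n, Pm (n+1) (j+1) j (k+1) k := by
    rw [hψstar, hψ, vmv_smul_left, vmv_smul_right, smul_smul, vmv_sum_left]
    congr 1
    refine Finset.sum_congr rfl fun j _ => ?_
    rw [vmv_sum_right]
    exact Finset.sum_congr rfl fun k _ => Pm_eq _ _ _ _ _
  -- the partial transpose of choiMd
  have hchoi : choiMd (n+1) = ∑ j ∈ Finset.range n,
      (c • Pm (n+1) 0 j 0 j + Pm (n+1) (j+1) n (j+1) n +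
        r • (Pm (n+1) 0 j (j+1) n + Pm (n+1) (j+1) n 0 j)) := by
    rw [choiMd]
    simp only [Nat.add_sub_cancel, hcoef1, hcoef2, Pm_def]
  have hT : ptransposeB (choiMd (n+1)) = c • Sig1 + Sig3 + (r • SigA + r • SigB) := by
    rw [hchoi, ptransposeB_sum]
    simp only [ptransposeB_add, ptransposeB_smul, ptransposeB_Pm]
    rw [hSig1, hSig3, hSigA, hSigB]
    simp only [smul_add, Finset.sum_add_distrib, ← Finset.smul_sum]
  -- the partial transpose of R
  have hTR : ptransposeB R = c • Sig1 + Sig2 + c • W := by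
    rw [hR, hψψ, hrc, ptransposeB_add, ptransposeB_add, ptransposeB_smul, ptransposeB_smul,
      hSig1, hSig2, hW]
    simp only [ptransposeB_sum, ptransposeB_Pm]
  -- split Sig2
  have hSig2split : Sig2 = Sig3 + Pm (n+1) 0 n 0 n := by
    rw [hSig2, hSig3, Finset.sum_range_succ']
  -- expansions of the rank-one pieces
  have hvA : vecMulVec (ket2 (n+1) 0 n) ψ = r • SigA := by
    rw [hψ, vmv_smul_right, vmv_sum_right, hSigA]
    congr 1
    exact Finset.sum_congr rfl fun j _ => Pm_eq _ _ _ _ _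
  have hvB : vecMulVec ψ (ket2 (n+1) 0 n) = r • SigB := by
    rw [hψ, vmv_smul_left, vmv_sum_left, hSigB]
    congr 1
    exact Finset.sum_congr rfl fun j _ => Pm_eq _ _ _ _ _
  -- identity 1 : R - T = uu*
  set u : Fin (n+1) × Fin (n+1) → ℂ := ket2 (n+1) 0 n - ψ with hu
  have hustar : star u = u := by rw [hu, star_sub, star_ket2, hψstar]
  have h1 : R - ptransposeB (choiMd (n+1)) = vecMulVec u (star u) := by
    rw [hustar, hu, vmv_sub_left, vmv_sub_right, vmv_sub_right, Pm_eq, hvA, hvB,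
      hT, hR, hSig2split, hψstar]
    abel
  set u' : Fin (n+1) × Fin (n+1) → ℂ := ket2 (n+1) 0 n + ψ with hu'
  have hu'star : star u' = u' := by rw [hu', star_add, star_ket2, hψstar]
  have h2 : R + ptransposeB (choiMd (n+1)) =
      (c • Sig1 + c • Sig1 + (Sig3 + Sig3)) + vecMulVec u' (star u') := by
    rw [hu'star, hu', vmv_add_left, vmv_add_right, vmv_add_right, Pm_eq, hvA, hvB,
      hT, hR, hSig2split, hψstar]
    abel
  -- identities for the W-parts
  have hs1 : ∑ j ∈ Finset.range n, ∑ k ∈ Finset.range n, Pm (n+1) (k+1) j (k+1) j = P1 := by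
    rw [hP1]; exact Finset.sum_comm
  have hs2 : ∑ j ∈ Finset.range n, ∑ k ∈ Finset.range n, Pm (n+1) (k+1) j (j+1) k = W := by
    rw [hW]; exact Finset.sum_comm
  set w : ℕ → ℕ → (Fin (n+1) × Fin (n+1) → ℂ) :=
    fun j k => ket2 (n+1) (j+1) k - ket2 (n+1) (k+1) j with hw
  set w' : ℕ → ℕ → (Fin (n+1) × Fin (n+1) → ℂ) :=
    fun j k => ket2 (n+1) (j+1) k + ket2 (n+1) (k+1) j with hw'
  have hWminus : ∑ j ∈ Finset.range n, ∑ k ∈ Finset.range n,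
      vecMulVec (w j k) (star (w j k)) = P1 + P1 - (W + W) := by
    have : ∀ j k : ℕ, vecMulVec (w j k) (star (w j k)) =
        Pm (n+1) (j+1) k (j+1) k - Pm (n+1) (j+1) k (k+1) j
          - (Pm (n+1) (k+1) j (j+1) k - Pm (n+1) (k+1) j (k+1) j) := by
      intro j k
      rw [hw]
      simp only [star_sub, star_ket2]
      rw [vmv_sub_left, vmv_sub_right, vmv_sub_right, Pm_eq, Pm_eq, Pm_eq, Pm_eq]
    simp only [this, Finset.sum_sub_distrib]
    rw [hs1, hs2, hP1, hW]
    abel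
  have hWplus : ∑ j ∈ Finset.range n, ∑ k ∈ Finset.range n,
      vecMulVec (w' j k) (star (w' j k)) = P1 + P1 + (W + W) := by
    have : ∀ j k : ℕ, vecMulVec (w' j k) (star (w' j k)) =
        Pm (n+1) (j+1) k (j+1) k + Pm (n+1) (j+1) k (k+1) j
          + (Pm (n+1) (k+1) j (j+1) k + Pm (n+1) (k+1) j (k+1) j) := by
      intro j k
      rw [hw']
      simp only [star_add, star_ket2]
      rw [vmv_add_left, vmv_add_right, vmv_add_right, Pm_eq, Pm_eq, Pm_eq, Pm_eq]
    simp only [this, Finset.sum_add_distrib]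
    rw [hs1, hs2, hP1, hW]
    abel
  -- the Kronecker identity
  have hsplit : ∑ i ∈ Finset.range (n+1), ∑ j ∈ Finset.range n, Pm (n+1) i j i j
      = P1 + Sig1 := by
    rw [Finset.sum_range_succ', hP1, hSig1]
  have hK : (1 : Matrix (Fin (n+1)) (Fin (n+1)) ℂ) ⊗ₖ S = c • (P1 + Sig1) + Sig2 := by
    rw [hS, kron_eq, hsplit, hSig2]
  -- identity 3
  have h3 : (1 : Matrix (Fin (n+1)) (Fin (n+1)) ℂ) ⊗ₖ S - ptransposeB R =
      (c * (1/2)) • ∑ j ∈ Finset.range n, ∑ k ∈ Finset.range n,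
        vecMulVec (w j k) (star (w j k)) := by
    rw [hK, hTR, hWminus]
    module
  have h4 : (1 : Matrix (Fin (n+1)) (Fin (n+1)) ℂ) ⊗ₖ S + ptransposeB R =
      (c • Sig1 + c • Sig1 + (Sig2 + Sig2)) + (c * (1/2)) • ∑ j ∈ Finset.range n,
        ∑ k ∈ Finset.range n, vecMulVec (w' j k) (star (w' j k)) := by
    rw [hK, hTR, hWplus]
    module
  -- PSD building blocks
  have hSig1psd : Sig1.PosSemidef := by
    rw [hSig1]; exact psd_sum _ _ fun j _ => vmv_psd _
  have hSig2psd : Sig2.PosSemidef := by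
    rw [hSig2]; exact psd_sum _ _ fun j _ => vmv_psd _
  have hSig3psd : Sig3.PosSemidef := by
    rw [hSig3]; exact psd_sum _ _ fun j _ => vmv_psd _
  have hRpsd : R.PosSemidef := by
    rw [hR]
    exact (((psd_smul hSig1psd hc0).add hSig2psd)).add (vmv_psd ψ)
  have hc2 : (0:ℂ) ≤ c * (1/2) := mul_nonneg hc0 hhalf
  refine ⟨R, S, hRpsd.1, ?_, ?_, ?_, ?_, ?_, ?_⟩
  · -- S Hermitian
    rw [hS, Matrix.IsHermitian, diagonal_conjTranspose]
    have hfun : (star fun j : Fin (n+1) => if (j:ℕ) < n then c else 1)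
        = fun j : Fin (n+1) => if (j:ℕ) < n then c else 1 := by
      funext j
      simp only [Pi.star_apply]
      split_ifs <;> simp [hstarc]
    rw [hfun]
  · rw [h1]; exact vmv_psd u
  · rw [h2]
    exact (((psd_smul hSig1psd hc0).add (psd_smul hSig1psd hc0)).add
      (hSig3psd.add hSig3psd)).add (vmv_psd u')
  · rw [h3]
    exact psd_smul (psd_sum _ _ fun j _ => psd_sum _ _ fun k _ => vmv_psd _) hc2
  · rw [h4]
    exact (((psd_smul hSig1psd hc0).add (psd_smul hSig1psd hc0)).add
      (hSig2psd.add hSig2psd)).add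
      (psd_smul (psd_sum _ _ fun j _ => psd_sum _ _ fun k _ => vmv_psd _) hc2)
  · -- trace
    rw [hS, Matrix.trace_diagonal]
    rw [Fin.sum_univ_eq_sum_range (fun j => if j < n then c else 1) (n+1)]
    rw [Finset.sum_range_succ]
    have h₁ : ∑ j ∈ Finset.range n, (if j < n then c else 1) = (n:ℂ) * c := by
      rw [Finset.sum_congr rfl (fun j hj => if_pos (Finset.mem_range.mp hj)),
        Finset.sum_const, nsmul_eq_mul, Finset.card_range]
    rw [h₁, if_neg (lt_irrefl n)]
    have : (n:ℂ) * c = 1 := by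
      rw [hc_def, Complex.ofReal_inv]
      push_cast
      field_simp
    rw [this]
    norm_num
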